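/- Let A be a ring, E_I and E_J orthogonal idempotents, X_{IJ} = E_I X_{IJ} E_J and X_{JI} = E_J X_{JI} E_I elements, and suppose (e_α)_{α∈A} (A finite) are pairwise orthogonal idempotents with e_α ≤ E_I and X_{IJ} X_{JI} = ∑_α σ_α e_α for units σ_α. Define ẽ_α := σ_α^{-1} X_{JI} e_α X_{IJ}. Then the ẽ_α are pairwise orthogonal idempotents with ẽ_α ≤ E_J. -/
import Mathlib


/-- The transported idempotent ẽ_α := σ_α⁻¹ · X_{JI} · e_α · X_{IJ}. -/
def transported {R : Type*} [Ring R] (XIJ XJI eα σinv : R) : R :=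
  σinv * XJI * eα * XIJ

/-- Idempotent transport: E_I, E_J orthogonal idempotents, X_{IJ} = E_I X_{IJ} E_J,
X_{JI} = E_J X_{JI} E_I, (e_α) pairwise orthogonal idempotents ≤ E_I with
X_{IJ} X_{JI} = ∑_α σ_α e_α for central units σ_α. Then the elements
ẽ_α := σ_α⁻¹ X_{JI} e_α X_{IJ} are pairwise orthogonal idempotents ≤ E_J. -/
theorem transported_idempotents {R : Type*} [Ring R] (EI EJ XIJ XJI : R)
    (hEI : EI * EI = EI) (hEJ : EJ * EJ = EJ)
    (hIJorth : EI * EJ = 0) (hJIorth : EJ * EI = 0)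
    (hX : XIJ = EI * XIJ * EJ) (hX' : XJI = EJ * XJI * EI)
    {ι : Type*} [Fintype ι] (e : ι → R) (σ : ι → Rˣ)
    (he : ∀ α, e α * e α = e α)
    (horth : ∀ α β, α ≠ β → e α * e β = 0)
    (hle : ∀ α, e α * EI = e α ∧ EI * e α = e α)
    (hcentral : ∀ α (r : R), (σ α : R) * r = r * (σ α : R))
    (hspec : XIJ * XJI = ∑ α, (σ α : R) * e α) :
    (∀ α, transported XIJ XJI (e α) (((σ α)⁻¹ : Rˣ) : R) *
        transported XIJ XJI (e α) (((σ α)⁻¹ : Rˣ) : R) =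
        transported XIJ XJI (e α) (((σ α)⁻¹ : Rˣ) : R)) ∧
    (∀ α β, α ≠ β → transported XIJ XJI (e α) (((σ α)⁻¹ : Rˣ) : R) *
        transported XIJ XJI (e β) (((σ β)⁻¹ : Rˣ) : R) = 0) ∧
    (∀ α, transported XIJ XJI (e α) (((σ α)⁻¹ : Rˣ) : R) * EJ =
        transported XIJ XJI (e α) (((σ α)⁻¹ : Rˣ) : R) ∧
      EJ * transported XIJ XJI (e α) (((σ α)⁻¹ : Rˣ) : R) =
        transported XIJ XJI (e α) (((σ α)⁻¹ : Rˣ) : R)) := by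
  -- inverses of central units are central
  have hcomm : ∀ α (r : R), Commute (((σ α)⁻¹ : Rˣ) : R) r := by
    intro α r
    exact Commute.units_inv_left (hcentral α r)
  have swap : ∀ α (a b : R), a * ((((σ α)⁻¹ : Rˣ) : R) * b)
      = (((σ α)⁻¹ : Rˣ) : R) * (a * b) := by
    intro α a b
    rw [← mul_assoc, ← (hcomm α a).eq, mul_assoc]
  -- key middle computations
  have hmid_ne : ∀ α β, α ≠ β → e α * (XIJ * XJI) * e β = 0 := by
    intro α β hne
    rw [hspec, Finset.mul_sum, Finset.sum_mul]
    apply Finset.sum_eq_zero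
    intro γ _
    rw [← mul_assoc, ← hcentral γ (e α)]
    by_cases h : γ = α
    · subst h
      rw [mul_assoc (σ γ : R), he, mul_assoc, horth γ β hne, mul_zero]
    · rw [mul_assoc (σ γ : R), horth α γ (fun hh => h hh.symm), mul_zero, zero_mul]
  have hmid_eq : ∀ α, e α * (XIJ * XJI) * e α = (σ α : R) * e α := by
    intro α
    rw [hspec, Finset.mul_sum, Finset.sum_mul]
    rw [Finset.sum_eq_single α]
    · rw [← mul_assoc, ← hcentral α (e α), mul_assoc (σ α : R), he, mul_assoc, he]
    · intro γ _ hγ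
      rw [← mul_assoc, ← hcentral γ (e α), mul_assoc (σ γ : R),
        horth α γ (Ne.symm hγ), mul_zero, zero_mul]
    · intro h
      exact absurd (Finset.mem_univ α) h
  -- rearrangement of the product of two transported elements
  have rearr : ∀ α β, ((((σ α)⁻¹ : Rˣ) : R) * XJI * e α * XIJ) *
      ((((σ β)⁻¹ : Rˣ) : R) * XJI * e β * XIJ)
      = (((σ α)⁻¹ : Rˣ) : R) * ((((σ β)⁻¹ : Rˣ) : R) *
        (XJI * (e α * (XIJ * XJI) * e β) * XIJ)) := by
    intro α β
    calc ((((σ α)⁻¹ : Rˣ) : R) * XJI * e α * XIJ) *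
        ((((σ β)⁻¹ : Rˣ) : R) * XJI * e β * XIJ)
        = (((σ α)⁻¹ : Rˣ) : R) * (XJI * (e α * (XIJ * ((((σ β)⁻¹ : Rˣ) : R) *
            (XJI * (e β * XIJ)))))) := by noncomm_ring
      _ = (((σ α)⁻¹ : Rˣ) : R) * (XJI * (e α * ((((σ β)⁻¹ : Rˣ) : R) *
            (XIJ * (XJI * (e β * XIJ)))))) := by rw [swap β XIJ]
      _ = (((σ α)⁻¹ : Rˣ) : R) * (XJI * ((((σ β)⁻¹ : Rˣ) : R) *
            (e α * (XIJ * (XJI * (e β * XIJ)))))) := by rw [swap β (e α)]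
      _ = (((σ α)⁻¹ : Rˣ) : R) * ((((σ β)⁻¹ : Rˣ) : R) *
            (XJI * (e α * (XIJ * (XJI * (e β * XIJ)))))) := by rw [swap β XJI]
      _ = (((σ α)⁻¹ : Rˣ) : R) * ((((σ β)⁻¹ : Rˣ) : R) *
            (XJI * (e α * (XIJ * XJI) * e β) * XIJ)) := by noncomm_ring
  have key_eq : ∀ α, transported XIJ XJI (e α) (((σ α)⁻¹ : Rˣ) : R) *
      transported XIJ XJI (e α) (((σ α)⁻¹ : Rˣ) : R) =
      transported XIJ XJI (e α) (((σ α)⁻¹ : Rˣ) : R) := by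
    intro α
    unfold transported
    rw [rearr, hmid_eq]
    rw [← mul_assoc XJI, ← hcentral α XJI]
    calc (((σ α)⁻¹ : Rˣ) : R) * ((((σ α)⁻¹ : Rˣ) : R) * ((σ α : R) * XJI * e α * XIJ))
        = (((σ α)⁻¹ : Rˣ) : R) * (((((σ α)⁻¹ : Rˣ) : R) * (σ α : R)) *
            (XJI * (e α * XIJ))) := by noncomm_ring
      _ = (((σ α)⁻¹ : Rˣ) : R) * (XJI * (e α * XIJ)) := by
            rw [Units.inv_mul, one_mul]
      _ = (((σ α)⁻¹ : Rˣ) : R) * XJI * e α * XIJ := by noncomm_ring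
  have key_ne : ∀ α β, α ≠ β → transported XIJ XJI (e α) (((σ α)⁻¹ : Rˣ) : R) *
      transported XIJ XJI (e β) (((σ β)⁻¹ : Rˣ) : R) = 0 := by
    intro α β hne
    unfold transported
    rw [rearr, hmid_ne α β hne]
    simp
  -- domination by EJ
  have hXIJEJ : XIJ * EJ = XIJ := by
    nth_rewrite 1 [hX]
    rw [mul_assoc, hEJ, ← hX]
  have hEJXJI : EJ * XJI = XJI := by
    nth_rewrite 1 [hX']
    rw [← mul_assoc, ← mul_assoc, hEJ, ← hX']
  refine ⟨key_eq, key_ne, fun α => ⟨?_, ?_⟩⟩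
  · unfold transported
    rw [mul_assoc, hXIJEJ]
  · unfold transported
    calc EJ * ((((σ α)⁻¹ : Rˣ) : R) * XJI * e α * XIJ)
        = EJ * ((((σ α)⁻¹ : Rˣ) : R) * (XJI * (e α * XIJ))) := by noncomm_ring
      _ = (((σ α)⁻¹ : Rˣ) : R) * (EJ * (XJI * (e α * XIJ))) := swap α EJ _
      _ = (((σ α)⁻¹ : Rˣ) : R) * (XJI * (e α * XIJ)) := by
            rw [← mul_assoc EJ, hEJXJI]
      _ = (((σ α)⁻¹ : Rˣ) : R) * XJI * e α * XIJ := by noncomm_ring
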